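/- Equivalence of the Lagrangian condition and per-period minimization: assume each A_t is convex and differentiable and each C_t is convex, s* is feasible for problem P, and the pair (s*, λ*) satisfies complementary slackness (λ*_t = 0 if 0 < s*_t < E_t, λ*_t ≥ 0 if s*_t = 0, λ*_t ≤ 0 if s*_t = E_t). Define ν*_t = ∑_{u=t}^T [λ*_u − A'_u(s*_u)]. Then the Lagrangian saddle condition — for all s with s_0 = s*_0 and s_t − s_{t-1} ∈ X_t for all t, ∑_t [C_t(s_t−s_{t-1}) + A_t(s_t) − λ*_t s_t] ≥ ∑_t [C_t(s*_t−s*_{t-1}) + A_t(s*_t) − λ*_t s*_t] — holds if and only if for every t, x = s*_t − s*_{t-1} minimizes C_t(x) − ν*_t x over x ∈ X_t. -/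

import Mathlib

open Set

private lemma supportLine8 {f : ℝ → ℝ} {f' x : ℝ} (hf : ConvexOn ℝ Set.univ f)
    (hd : HasDerivAt f f' x) (y : ℝ) : f x + f' * (y - x) ≤ f y := by
  rcases lt_trichotomy x y with h | h | h
  · have h1 := hf.le_slope_of_hasDerivAt (mem_univ x) (mem_univ y) h hd
    rw [slope_def_field] at h1
    have hy : 0 < y - x := sub_pos.2 h
    have := (le_div_iff₀ hy).mp h1
    linarith
  · simp [h]
  · have h1 := hf.slope_le_of_hasDerivAt (mem_univ y) (mem_univ x) h hd
    rw [slope_def_field] at h1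
    have hy : 0 < x - y := sub_pos.2 h
    have := (div_le_iff₀ hy).mp h1
    nlinarith

private lemma derivNonnegOfRightMin8 {φ : ℝ → ℝ} {D : ℝ}
    (hd : HasDerivAt φ D 0) (h : ∀ ε ∈ Set.Ioc (0:ℝ) 1, φ 0 ≤ φ ε) : 0 ≤ D := by
  have h1 : Filter.Tendsto (slope φ 0) (nhdsWithin 0 {(0:ℝ)}ᶜ) (nhds D) :=
    hasDerivAt_iff_tendsto_slope.mp hd
  have h2 : Filter.Tendsto (slope φ 0) (nhdsWithin 0 (Set.Ioi 0)) (nhds D) :=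
    h1.mono_left (nhdsWithin_mono 0 (fun x hx => ne_of_gt hx))
  refine ge_of_tendsto h2 ?_
  filter_upwards [Ioc_mem_nhdsGT_of_mem ⟨le_refl (0:ℝ), one_pos⟩] with ε hε
  rw [slope_def_field]
  have h3 := h ε hε
  have h4 : (0:ℝ) < ε := hε.1
  apply div_nonneg (by linarith) (by linarith)

private lemma splitSum8 {T t : ℕ} (ht1 : 1 ≤ t) (htT : t ≤ T) (f : ℕ → ℝ) :
    ∑ u ∈ Finset.Icc 1 T, f u
      = ∑ u ∈ Finset.Ioc 0 (t-1), f u + f t + ∑ u ∈ Finset.Ioc t T, f u := by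
  have e1 : Finset.Icc 1 T = Finset.Ioc 0 T := by ext x; simp; omega
  rw [e1, ← Finset.sum_Ioc_consecutive f (Nat.zero_le (t-1))
    (le_trans (Nat.sub_le t 1) htT)]
  rw [add_assoc]
  congr 1
  rw [← Finset.sum_Ioc_consecutive f (Nat.sub_le t 1) htT]
  congr 1
  have e2 : Finset.Ioc (t-1) t = {t} := by ext x; simp; omega
  rw [e2, Finset.sum_singleton]

private lemma splitSum8' {T t : ℕ} (htT : t ≤ T) (f : ℕ → ℝ) :
    ∑ u ∈ Finset.Icc t T, f u = f t + ∑ u ∈ Finset.Ioc t T, f u := by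
  have e : Finset.Icc t T = insert t (Finset.Ioc t T) := by ext x; simp; omega
  rw [e, Finset.sum_insert (by simp)]

private lemma telescope8 (s sstar : ℕ → ℝ) (h0 : s 0 = sstar 0) (u : ℕ) :
    ∑ v ∈ Finset.Icc 1 u, ((s v - s (v-1)) - (sstar v - sstar (v-1)))
      = s u - sstar u := by
  induction u with
  | zero => simp [h0]
  | succ n ih =>
    rw [Finset.sum_Icc_succ_top (by omega : 1 ≤ n + 1), ih]
    simp only [Nat.add_sub_cancel]
    ring

private lemma abelSum8 (T : ℕ) (g d S nu : ℕ → ℝ)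
    (hS : ∀ u, ∑ v ∈ Finset.Icc 1 u, d v = S u)
    (hnu : ∀ t, nu t = ∑ u ∈ Finset.Icc t T, g u) :
    ∑ t ∈ Finset.Icc 1 T, nu t * d t = ∑ u ∈ Finset.Icc 1 T, g u * S u := by
  calc ∑ t ∈ Finset.Icc 1 T, nu t * d t
      = ∑ t ∈ Finset.Ico 1 (T+1), ∑ u ∈ Finset.Ico t (T+1), g u * d t := by
        rw [Finset.Ico_add_one_right_eq_Icc]
        refine Finset.sum_congr rfl fun t _ => ?_
        rw [Finset.Ico_add_one_right_eq_Icc, hnu, Finset.sum_mul]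
    _ = ∑ u ∈ Finset.Ico 1 (T+1), ∑ t ∈ Finset.Ico 1 (u+1), g u * d t :=
        Finset.sum_Ico_Ico_comm 1 (T+1) _
    _ = ∑ u ∈ Finset.Icc 1 T, g u * S u := by
        rw [Finset.Ico_add_one_right_eq_Icc]
        refine Finset.sum_congr rfl fun u _ => ?_
        rw [Finset.Ico_add_one_right_eq_Icc, ← Finset.mul_sum, hS]

/-- Equivalence of the Lagrangian saddle condition and per-period minimization. -/
theorem stmt8 (T : ℕ) (PO PI E : ℕ → ℝ) (C A A' : ℕ → ℝ → ℝ)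
    (hC : ∀ t, ConvexOn ℝ (Icc (-(PO t)) (PI t)) (C t))
    (hA : ∀ t, ConvexOn ℝ Set.univ (A t))
    (hA' : ∀ t x, HasDerivAt (A t) (A' t x) x)
    (sstar lam : ℕ → ℝ)
    (hfeas : ∀ t ∈ Finset.Icc 1 T, sstar t ∈ Icc 0 (E t) ∧
      sstar t - sstar (t-1) ∈ Icc (-(PO t)) (PI t))
    (hcs : ∀ t ∈ Finset.Icc 1 T,
      (0 < sstar t ∧ sstar t < E t → lam t = 0) ∧
      (sstar t = 0 → 0 ≤ lam t) ∧ (sstar t = E t → lam t ≤ 0))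
    (nu : ℕ → ℝ)
    (hnu : ∀ t, nu t = ∑ u ∈ Finset.Icc t T, (lam u - A' u (sstar u))) :
    (∀ s : ℕ → ℝ, s 0 = sstar 0 →
      (∀ t ∈ Finset.Icc 1 T, s t - s (t-1) ∈ Icc (-(PO t)) (PI t)) →
      ∑ t ∈ Finset.Icc 1 T,
          (C t (sstar t - sstar (t-1)) + A t (sstar t) - lam t * sstar t) ≤
      ∑ t ∈ Finset.Icc 1 T, (C t (s t - s (t-1)) + A t (s t) - lam t * s t))
    ↔
    (∀ t ∈ Finset.Icc 1 T, ∀ x ∈ Icc (-(PO t)) (PI t),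
      C t (sstar t - sstar (t-1)) - nu t * (sstar t - sstar (t-1)) ≤
        C t x - nu t * x) := by
  constructor
  · -- saddle condition → per-period minimization
    intro hsaddle t ht x hx
    obtain ⟨ht1, htT⟩ := Finset.mem_Icc.mp ht
    set xs : ℝ := sstar t - sstar (t-1) with hxs
    have hxsmem : xs ∈ Icc (-(PO t)) (PI t) := (hfeas t ht).2
    set h : ℝ := x - xs with hh
    -- the perturbed trajectory
    set sp : ℝ → ℕ → ℝ := fun ε u => if t ≤ u then sstar u + ε * h else sstar u with hsp
    -- the auxiliary convex function of ε
    set φ : ℝ → ℝ := fun ε => ε * (C t x - C t xs) +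
      ∑ u ∈ Finset.Icc t T, (A u (sstar u + ε * h) - A u (sstar u) - lam u * (ε * h))
      with hφ
    have hφ0 : φ 0 = 0 := by simp [hφ]
    -- positivity of φ on (0,1]
    have hφpos : ∀ ε ∈ Set.Ioc (0:ℝ) 1, φ 0 ≤ φ ε := by
      intro ε hε
      obtain ⟨hε0, hε1⟩ := hε
      -- feasibility of the perturbed trajectory
      have hsp0 : sp ε 0 = sstar 0 := by
        simp only [hsp]
        rw [if_neg (by omega)]
      have hspfeas : ∀ u ∈ Finset.Icc 1 T,
          sp ε u - sp ε (u-1) ∈ Icc (-(PO u)) (PI u) := by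
        intro u hu
        obtain ⟨hu1, huT⟩ := Finset.mem_Icc.mp hu
        rcases lt_trichotomy u t with hlt | heq | hgt
        · have e1 : sp ε u = sstar u := by simp only [hsp]; rw [if_neg (by omega)]
          have e2 : sp ε (u-1) = sstar (u-1) := by simp only [hsp]; rw [if_neg (by omega)]
          rw [e1, e2]; exact (hfeas u hu).2
        · subst heq
          have e1 : sp ε u = sstar u + ε * h := by simp only [hsp]; rw [if_pos (le_refl u)]
          have e2 : sp ε (u-1) = sstar (u-1) := by simp only [hsp]; rw [if_neg (by omega)]
          rw [e1, e2]
          have harg : sstar u + ε * h - sstar (u-1) = (1-ε) • xs + ε • x := by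
            simp only [smul_eq_mul, hh, hxs]; ring
          rw [harg]
          exact (convex_Icc _ _) hxsmem hx (show (0:ℝ) ≤ 1-ε by linarith)
            (show (0:ℝ) ≤ ε by linarith) (show (1-ε) + ε = 1 by ring)
        · have e1 : sp ε u = sstar u + ε * h := by simp only [hsp]; rw [if_pos (by omega)]
          have e2 : sp ε (u-1) = sstar (u-1) + ε * h := by
            simp only [hsp]; rw [if_pos (by omega)]
          rw [e1, e2]
          have harg : sstar u + ε * h - (sstar (u-1) + ε * h) = sstar u - sstar (u-1) := by ring
          rw [harg]; exact (hfeas u hu).2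
      have hsad := hsaddle (sp ε) hsp0 hspfeas
      -- split the sums at t
      set F : ℕ → ℝ := fun u => C u (sp ε u - sp ε (u-1)) + A u (sp ε u) - lam u * sp ε u
        with hF
      set G : ℕ → ℝ := fun u => C u (sstar u - sstar (u-1)) + A u (sstar u) - lam u * sstar u
        with hG
      have E1 := splitSum8 ht1 htT F
      have E2 := splitSum8 ht1 htT G
      have E3 : ∑ u ∈ Finset.Ioc 0 (t-1), F u = ∑ u ∈ Finset.Ioc 0 (t-1), G u := by
        refine Finset.sum_congr rfl fun u hu => ?_
        obtain ⟨hu0, hut⟩ := Finset.mem_Ioc.mp hu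
        have e1 : sp ε u = sstar u := by simp only [hsp]; rw [if_neg (by omega)]
        have e2 : sp ε (u-1) = sstar (u-1) := by simp only [hsp]; rw [if_neg (by omega)]
        simp only [hF, hG, e1, e2]
      have E4 : ∑ u ∈ Finset.Ioc t T, F u - ∑ u ∈ Finset.Ioc t T, G u
          = ∑ u ∈ Finset.Ioc t T,
              (A u (sstar u + ε * h) - A u (sstar u) - lam u * (ε * h)) := by
        rw [← Finset.sum_sub_distrib]
        refine Finset.sum_congr rfl fun u hu => ?_
        obtain ⟨hut, huT⟩ := Finset.mem_Ioc.mp hu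
        have e1 : sp ε u = sstar u + ε * h := by simp only [hsp]; rw [if_pos (by omega)]
        have e2 : sp ε (u-1) = sstar (u-1) + ε * h := by
          simp only [hsp]; rw [if_pos (by omega)]
        simp only [hF, hG, e1, e2]
        have harg : sstar u + ε * h - (sstar (u-1) + ε * h) = sstar u - sstar (u-1) := by ring
        rw [harg]; ring
      have E5 : F t = C t (xs + ε * h) + A t (sstar t + ε * h) - lam t * (sstar t + ε * h) := by
        have e1 : sp ε t = sstar t + ε * h := by simp only [hsp]; rw [if_pos (le_refl t)]
        have e2 : sp ε (t-1) = sstar (t-1) := by simp only [hsp]; rw [if_neg (by omega)]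
        simp only [hF, e1, e2]
        have harg : sstar t + ε * h - sstar (t-1) = xs + ε * h := by rw [hxs]; ring
        rw [harg]
      have E6 : G t = C t xs + A t (sstar t) - lam t * sstar t := by simp only [hG, hxs]
      -- convexity of C t
      have hconv : C t (xs + ε * h) ≤ (1-ε) * C t xs + ε * C t x := by
        have harg : xs + ε * h = (1-ε) • xs + ε • x := by
          simp only [smul_eq_mul, hh]; ring
        rw [harg]
        have := (hC t).2 hxsmem hx (show (0:ℝ) ≤ 1-ε by linarith)
          (show (0:ℝ) ≤ ε by linarith) (show (1-ε) + ε = 1 by ring)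
        simpa [smul_eq_mul] using this
      -- the sum over Icc t T in φ splits as the t-term plus the Ioc t T sum
      have E7 := splitSum8' htT
        (fun u => A u (sstar u + ε * h) - A u (sstar u) - lam u * (ε * h))
      rw [hφ0]
      have hφε : φ ε = ε * (C t x - C t xs) +
          ∑ u ∈ Finset.Icc t T, (A u (sstar u + ε * h) - A u (sstar u) - lam u * (ε * h)) := rfl
      rw [hφε, E7]
      -- hsad : ∑ G ≤ ∑ F
      rw [E1, E2, E3] at hsad
      linarith [hsad, hconv, E4, E5, E6]
    -- derivative of φ at 0
    set D : ℝ := (C t x - C t xs) +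
      ∑ u ∈ Finset.Icc t T, (A' u (sstar u) * h - lam u * h) with hD
    have hφd : HasDerivAt φ D 0 := by
      have hd1 : HasDerivAt (fun ε : ℝ => ε * (C t x - C t xs)) (C t x - C t xs) 0 :=
        hasDerivAt_mul_const _
      have hd2 : ∀ u ∈ Finset.Icc t T,
          HasDerivAt (fun ε : ℝ => A u (sstar u + ε * h) - A u (sstar u) - lam u * (ε * h))
            (A' u (sstar u) * h - lam u * h) 0 := by
        intro u _
        have g1 : HasDerivAt (fun ε : ℝ => sstar u + ε * h) h 0 := by
          simpa using (hasDerivAt_mul_const (c := h)).const_add (sstar u)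
        have g2 : HasDerivAt (fun ε : ℝ => A u (sstar u + ε * h)) (A' u (sstar u) * h) 0 := by
          have := (hA' u (sstar u + 0 * h)).comp 0 g1
          simp only [zero_mul, add_zero] at this
          exact this
        have g3 : HasDerivAt (fun ε : ℝ => lam u * (ε * h)) (lam u * h) 0 := by
          have := (hasDerivAt_mul_const (x := (0:ℝ)) (c := h)).const_mul (lam u)
          simpa [mul_comm] using this
        exact (g2.sub_const (A u (sstar u))).sub g3
      exact hd1.add (HasDerivAt.fun_sum hd2)
    have hDnn : 0 ≤ D := derivNonnegOfRightMin8 hφd hφpos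
    -- rewrite D using nu
    have hsum2 : ∑ u ∈ Finset.Icc t T, (A' u (sstar u) * h - lam u * h) = -(nu t * h) := by
      rw [hnu t, Finset.sum_mul, ← Finset.sum_neg_distrib]
      refine Finset.sum_congr rfl fun u _ => ?_
      ring
    rw [hD, hsum2] at hDnn
    have : nu t * h ≤ C t x - C t xs := by linarith
    rw [hh] at this
    linarith [this]
  · -- per-period minimization → saddle condition
    intro hmin s hs0 hsfeas
    have hAbel : ∑ u ∈ Finset.Icc 1 T,
        nu u * ((s u - s (u-1)) - (sstar u - sstar (u-1)))
        = ∑ u ∈ Finset.Icc 1 T, (lam u - A' u (sstar u)) * (s u - sstar u) :=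
      abelSum8 T (fun u => lam u - A' u (sstar u))
        (fun u => (s u - s (u-1)) - (sstar u - sstar (u-1)))
        (fun u => s u - sstar u) nu (telescope8 s sstar hs0) hnu
    have key : ∀ u ∈ Finset.Icc 1 T,
        (C u (sstar u - sstar (u-1)) + A u (sstar u) - lam u * sstar u) +
          ((A' u (sstar u) - lam u) * (s u - sstar u) +
            nu u * ((s u - s (u-1)) - (sstar u - sstar (u-1))))
        ≤ C u (s u - s (u-1)) + A u (s u) - lam u * s u := by
      intro u hu
      have h1 := hmin u hu (s u - s (u-1)) (hsfeas u hu)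
      have h2 := supportLine8 (hA u) (hA' u (sstar u)) (s u)
      nlinarith [h1, h2]
    have hzero : ∑ u ∈ Finset.Icc 1 T,
        ((A' u (sstar u) - lam u) * (s u - sstar u) +
          nu u * ((s u - s (u-1)) - (sstar u - sstar (u-1)))) = 0 := by
      rw [Finset.sum_add_distrib, hAbel, ← Finset.sum_add_distrib]
      refine Finset.sum_eq_zero fun u _ => ?_
      ring
    have Ssum := Finset.sum_le_sum key
    rw [Finset.sum_add_distrib, hzero, add_zero] at Ssum
    exact Ssum
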